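/- Structure of branch orderings (established in the proof of Lemma 5.5): Let X₀, X₁, …, Xₙ be a right-deep-tree order without cross products of the branch join graph on {0, 1, …, n}, and suppose X_k = n for some 1 ≤ k ≤ n. Then {X₀, X₁, …, X_{k−1}} = {n−k, n−k+1, …, n−1} as sets, and X_i = n − i for every i with k < i ≤ n. -/

import Mathlib

/-- Adjacency in the branch (chain) join graph on vertices `{0, 1, …, n}`: there is an
edge between `k - 1` and `k` for every `1 ≤ k ≤ n` and no other edges. -/
def chainAdj {n : ℕ} (a b : Fin (n + 1)) : Prop :=
  (a : ℕ) + 1 = (b : ℕ) ∨ (b : ℕ) + 1 = (a : ℕ)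

/-- The prefix `{X 0, …, X m}` of a right-deep-tree order is an interval. -/
lemma chain_prefix_interval {n : ℕ}
    (X : Fin (n + 1) → Fin (n + 1)) (hX : Function.Bijective X)
    (hRD : ∀ k : Fin (n + 1), 0 < (k : ℕ) → ∃ j, j < k ∧ chainAdj (X k) (X j)) :
    ∀ m : ℕ, m ≤ n → ∃ a : ℕ, a + m ≤ n ∧
      ∀ v : Fin (n + 1), (∃ i : Fin (n + 1), (i : ℕ) ≤ m ∧ X i = v) ↔
        (a ≤ (v : ℕ) ∧ (v : ℕ) ≤ a + m) := by
  intro m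
  induction m with
  | zero =>
    intro _
    refine ⟨(X 0 : ℕ), by simpa using (X 0).is_le, fun v => ?_⟩
    constructor
    · rintro ⟨i, hi, rfl⟩
      have : i = 0 := Fin.ext (by rw [Fin.val_zero]; omega)
      subst this; omega
    · intro ⟨h1, h2⟩
      exact ⟨0, le_refl _, Fin.ext (by omega)⟩
  | succ m ih =>
    intro hm
    obtain ⟨a, ha, hiff⟩ := ih (by omega)
    set M : Fin (n + 1) := ⟨m + 1, by omega⟩ with hM
    obtain ⟨j, hj, hadj⟩ := hRD M (by simp [hM])
    have hjm : (j : ℕ) ≤ m := by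
      have := hj
      simp [hM, Fin.lt_def] at this
      omega
    have hXj : a ≤ (X j : ℕ) ∧ (X j : ℕ) ≤ a + m :=
      (hiff (X j)).1 ⟨j, hjm, rfl⟩
    have hXMnot : ¬ (a ≤ (X M : ℕ) ∧ (X M : ℕ) ≤ a + m) := by
      intro h
      obtain ⟨i, hi, hXi⟩ := (hiff (X M)).2 h
      have : i = M := hX.1 hXi
      subst this
      simp [hM] at hi
    have hcases : ((X M : ℕ) = a + m + 1) ∨ (1 ≤ a ∧ (X M : ℕ) = a - 1) := by
      rcases hadj with h | h <;> omega
    rcases hcases with hc | hc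
    · refine ⟨a, by omega, fun v => ?_⟩
      constructor
      · rintro ⟨i, hi, rfl⟩
        rcases Nat.lt_or_ge (i : ℕ) (m + 1) with h | h
        · have := (hiff (X i)).1 ⟨i, by omega, rfl⟩; omega
        · have : i = M := Fin.ext (by simp [hM]; omega)
          subst this; omega
      · intro ⟨h1, h2⟩
        rcases Nat.lt_or_ge (v : ℕ) (a + m + 1) with h | h
        · obtain ⟨i, hi, hXi⟩ := (hiff v).2 ⟨h1, by omega⟩
          exact ⟨i, by omega, hXi⟩
        · have hv : (v : ℕ) = (X M : ℕ) := by omega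
          exact ⟨M, by simp [hM], Fin.ext hv.symm⟩
    · refine ⟨a - 1, by omega, fun v => ?_⟩
      constructor
      · rintro ⟨i, hi, rfl⟩
        rcases Nat.lt_or_ge (i : ℕ) (m + 1) with h | h
        · have := (hiff (X i)).1 ⟨i, by omega, rfl⟩; omega
        · have : i = M := Fin.ext (by simp [hM]; omega)
          subst this; omega
      · intro ⟨h1, h2⟩
        rcases Nat.lt_or_ge (v : ℕ) a with h | h
        · have hv : (v : ℕ) = (X M : ℕ) := by omega
          exact ⟨M, by simp [hM], Fin.ext hv.symm⟩
        · obtain ⟨i, hi, hXi⟩ := (hiff v).2 ⟨h, by omega⟩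
          exact ⟨i, by omega, hXi⟩

theorem chain_order_structure {n : ℕ} (hn : 1 ≤ n)
    (X : Fin (n + 1) → Fin (n + 1)) (hX : Function.Bijective X)
    (hRD : ∀ k : Fin (n + 1), 0 < (k : ℕ) → ∃ j, j < k ∧ chainAdj (X k) (X j))
    (k : Fin (n + 1)) (hk1 : 1 ≤ (k : ℕ)) (hk : X k = Fin.last n) :
    (∀ v : Fin (n + 1), (∃ i, i < k ∧ X i = v) ↔
        (n - (k : ℕ) ≤ (v : ℕ) ∧ (v : ℕ) < n)) ∧
      (∀ i : Fin (n + 1), k < i → (X i : ℕ) = n - (i : ℕ)) := by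
  have hkval : (X k : ℕ) = n := by rw [hk]; simp
  -- interval lemma specialized: for k ≤ m ≤ n, prefix m is [n-m, n]
  have key : ∀ m : ℕ, (k : ℕ) ≤ m → m ≤ n →
      ∀ v : Fin (n + 1), (∃ i : Fin (n + 1), (i : ℕ) ≤ m ∧ X i = v) ↔
        (n - m ≤ (v : ℕ) ∧ (v : ℕ) ≤ n) := by
    intro m hkm hmn v
    obtain ⟨a, ha, hiff⟩ := chain_prefix_interval X hX hRD m hmn
    have hnmem := (hiff (X k)).1 ⟨k, hkm, rfl⟩
    have han : a + m = n := by omega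
    rw [hiff v]; omega
  constructor
  · intro v
    constructor
    · rintro ⟨i, hi, rfl⟩
      have hik : (i : ℕ) < (k : ℕ) := hi
      have h1 := (key (k : ℕ) le_rfl k.is_le (X i)).1 ⟨i, by omega, rfl⟩
      have hne : (X i : ℕ) ≠ n := by
        intro h
        have : X i = X k := Fin.ext (by omega)
        have := hX.1 this
        omega
      omega
    · intro ⟨h1, h2⟩
      obtain ⟨i, hi, hXi⟩ := (key (k : ℕ) le_rfl k.is_le v).2 ⟨h1, by omega⟩
      refine ⟨i, ?_, hXi⟩
      have hne : i ≠ k := by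
        intro h; subst h
        rw [hXi] at hkval
        omega
      have : (i : ℕ) ≠ (k : ℕ) := fun h => hne (Fin.ext h)
      exact Fin.lt_def.2 (by omega)
  · intro i hki
    have hki' : (k : ℕ) < (i : ℕ) := hki
    have h1 := (key (i : ℕ) (by omega) i.is_le (X i)).1 ⟨i, le_rfl, rfl⟩
    have h2 : ¬ (n - ((i : ℕ) - 1) ≤ (X i : ℕ) ∧ (X i : ℕ) ≤ n) := by
      intro h
      obtain ⟨j, hj, hXj⟩ := (key ((i : ℕ) - 1) (by omega) (by omega) (X i)).2 h
      have : j = i := hX.1 hXj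
      subst this
      omega
    have hin : (i : ℕ) ≤ n := i.is_le
    omega
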